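/- Let G be the graph obtained by joining any two vertices of C_3(a,a,a) (or of C_5) to the central vertex of a star K_{1,s}. Then for any nonzero eigenvalue λ of A(G), m_λ(G) ≤ 2. -/

import Mathlib

open Module

attribute [local instance] Classical.propDecidable

noncomputable def adjMat {V : Type*} [Fintype V] (G : SimpleGraph V) : Matrix V V ℝ :=
  Matrix.of fun u v => if G.Adj u v then 1 else 0

noncomputable def eigMult {V : Type*} [Fintype V] (G : SimpleGraph V) (μ : ℝ) : ℕ :=
  Module.finrank ℝ (Module.End.eigenspace (adjMat G).mulVecLin μ)

def HasEig {V : Type*} [Fintype V] (G : SimpleGraph V) (μ : ℝ) : Prop :=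
  Module.End.HasEigenvalue (adjMat G).mulVecLin μ

def IsMatchingSet {V : Type*} (G : SimpleGraph V) (M : Finset (Sym2 V)) : Prop :=
  (∀ e ∈ M, e ∈ G.edgeSet) ∧
  ∀ e ∈ M, ∀ f ∈ M, e ≠ f → ∀ v, v ∈ e → v ∉ f

def IsInducedMatchingSet {V : Type*} (G : SimpleGraph V) (M : Finset (Sym2 V)) : Prop :=
  IsMatchingSet G M ∧
  ∀ e ∈ M, ∀ f ∈ M, e ≠ f → ∀ u v, u ∈ e → v ∈ f → ¬ G.Adj u v

noncomputable def matchNum {V : Type*} [Fintype V] (G : SimpleGraph V) : ℕ :=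
  sSup {k | ∃ M, IsMatchingSet G M ∧ M.card = k}

noncomputable def indMatchNum {V : Type*} [Fintype V] (G : SimpleGraph V) : ℕ :=
  sSup {k | ∃ M, IsInducedMatchingSet G M ∧ M.card = k}

noncomputable def cyclomatic {V : Type*} [Fintype V] (G : SimpleGraph V) : ℕ :=
  G.edgeSet.ncard + 1 - Fintype.card V

def delV {V : Type*} (G : SimpleGraph V) (v : V) : SimpleGraph {u : V // u ≠ v} :=
  G.induce {u : V | u ≠ v}

def starGraph (n : ℕ) : SimpleGraph (Fin (n + 1)) :=
  SimpleGraph.fromRel (fun u _ => u = 0)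

def triStar (a : ℕ) : SimpleGraph (Fin 3 ⊕ Fin 3 × Fin a) :=
  SimpleGraph.fromRel (fun x y =>
    (∃ i j, x = Sum.inl i ∧ y = Sum.inl j) ∨
    (∃ i k, x = Sum.inl i ∧ y = Sum.inr (i, k)))

def joinStar {V : Type*} (B : SimpleGraph V) (p q : V) (s : ℕ) :
    SimpleGraph (V ⊕ (Unit ⊕ Fin s)) :=
  SimpleGraph.fromRel (fun x y =>
    (∃ a b, x = Sum.inl a ∧ y = Sum.inl b ∧ B.Adj a b) ∨
    (x = Sum.inl p ∧ y = Sum.inr (Sum.inl ())) ∨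
    (x = Sum.inl q ∧ y = Sum.inr (Sum.inl ())) ∨
    (∃ k, x = Sum.inr (Sum.inl ()) ∧ y = Sum.inr (Sum.inr k)))


set_option linter.unusedSectionVars false

noncomputable def eigC {W : Type*} [Fintype W] (H : SimpleGraph W) (μ : ℝ) (p q : W) :
    Submodule ℝ (W → ℝ) :=
  (Module.End.eigenspace (adjMat H).mulVecLin μ) ⊓
    LinearMap.ker ((LinearMap.proj p : (W → ℝ) →ₗ[ℝ] ℝ) + LinearMap.proj q)

lemma mem_eigC {W : Type*} [Fintype W] (H : SimpleGraph W) (μ : ℝ) (p q : W) (y : W → ℝ) :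
    y ∈ eigC H μ p q ↔
      (∀ u, (∑ v, (if H.Adj u v then y v else 0)) = μ * y u) ∧ y p + y q = 0 := by
  rw [eigC, Submodule.mem_inf, LinearMap.mem_ker, Module.End.mem_eigenspace_iff]
  constructor
  · rintro ⟨h1, h2⟩
    refine ⟨fun u => ?_, by simpa using h2⟩
    have := congrFun h1 u
    simpa [adjMat, Matrix.mulVecLin_apply, Matrix.mulVec, dotProduct, ite_mul] using this
  · rintro ⟨h1, h2⟩
    refine ⟨funext fun u => ?_, by simpa using h2⟩
    have := h1 u
    simpa [adjMat, Matrix.mulVecLin_apply, Matrix.mulVec, dotProduct, ite_mul] using this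

lemma mem_eig {V : Type*} [Fintype V] (G : SimpleGraph V) (μ : ℝ) (y : V → ℝ) :
    y ∈ Module.End.eigenspace (adjMat G).mulVecLin μ ↔
      ∀ u, (∑ v, (if G.Adj u v then y v else 0)) = μ * y u := by
  rw [Module.End.mem_eigenspace_iff]
  constructor
  · intro h u
    have := congrFun h u
    simpa [adjMat, Matrix.mulVecLin_apply, Matrix.mulVec, dotProduct, ite_mul] using this
  · intro h
    funext u
    have := h u
    simp only [adjMat, Matrix.mulVecLin_apply, Matrix.mulVec, dotProduct, Matrix.of_apply,
      ite_mul, one_mul, zero_mul]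
    rw [this]; rfl

lemma finrank_le_one_of_eval {W : Type*} [Fintype W] (S : Submodule ℝ (W → ℝ)) (m : W)
    (h : ∀ y ∈ S, y m = 0 → y = 0) : finrank ℝ S ≤ 1 := by
  have : Function.Injective ((LinearMap.proj m : (W → ℝ) →ₗ[ℝ] ℝ).comp S.subtype) := by
    intro a b hab
    apply Subtype.ext
    have hS : (a : W → ℝ) - b ∈ S := S.sub_mem a.2 b.2
    have h0 : ((a : W → ℝ) - b) m = 0 := by simpa [sub_eq_zero] using hab
    have := h _ hS h0
    rwa [sub_eq_zero] at this
  simpa using LinearMap.finrank_le_finrank_of_injective this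

section adj
variable {V : Type*} [Fintype V] (B : SimpleGraph V) (p q : V) (s : ℕ)

lemma jadj_ll (a b : V) : (joinStar B p q s).Adj (Sum.inl a) (Sum.inl b) ↔ B.Adj a b := by
  constructor
  · rintro ⟨hne, (⟨a',b',ha,hb,hab⟩|⟨_,h⟩|⟨_,h⟩|⟨k,h,_⟩)|(⟨a',b',ha,hb,hab⟩|⟨_,h⟩|⟨_,h⟩|⟨k,h,_⟩)⟩ <;>
      simp_all
    all_goals first | exact hab | exact hab.symm
  · intro h
    exact ⟨by simp [h.ne], Or.inl (Or.inl ⟨a, b, rfl, rfl, h⟩)⟩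

lemma jadj_lc (a : V) :
    (joinStar B p q s).Adj (Sum.inl a) (Sum.inr (Sum.inl ())) ↔ a = p ∨ a = q := by
  constructor
  · rintro ⟨hne, (h|h|h|h)|(h|h|h|h)⟩ <;> simp_all
  · rintro (rfl|rfl)
    · exact ⟨by simp, Or.inl (Or.inr (Or.inl ⟨rfl, rfl⟩))⟩
    · exact ⟨by simp, Or.inl (Or.inr (Or.inr (Or.inl ⟨rfl, rfl⟩)))⟩

lemma jadj_lleaf (a : V) (k : Fin s) :
    ¬ (joinStar B p q s).Adj (Sum.inl a) (Sum.inr (Sum.inr k)) := by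
  rintro ⟨hne, (h|h|h|h)|(h|h|h|h)⟩ <;> simp_all

lemma jadj_cleaf (k : Fin s) :
    (joinStar B p q s).Adj (Sum.inr (Sum.inl ())) (Sum.inr (Sum.inr k)) :=
  ⟨by simp, Or.inl (Or.inr (Or.inr (Or.inr ⟨k, rfl, rfl⟩)))⟩

lemma jadj_leafleaf (k k' : Fin s) :
    ¬ (joinStar B p q s).Adj (Sum.inr (Sum.inr k)) (Sum.inr (Sum.inr k')) := by
  rintro ⟨hne, (h|h|h|h)|(h|h|h|h)⟩ <;> simp_all
end adj

section red
variable {V : Type*} [Fintype V] {B : SimpleGraph V} {p q : V} {s : ℕ} {μ : ℝ}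

lemma sum_pair {W : Type*} [Fintype W] {p q : W} (hpq : p ≠ q) (f : W → ℝ) :
    (∑ a, (if a = p ∨ a = q then f a else 0)) = f p + f q := by
  classical
  have h : ∀ a, (if a = p ∨ a = q then f a else 0)
      = (if a = p then f a else 0) + (if a = q then f a else 0) := by
    intro a
    by_cases h1 : a = p <;> by_cases h2 : a = q <;> simp_all
  rw [Finset.sum_congr rfl (fun a _ => h a), Finset.sum_add_distrib]
  simp

lemma jrow_leaf (x : V ⊕ (Unit ⊕ Fin s) → ℝ)
    (hx : x ∈ Module.End.eigenspace (adjMat (joinStar B p q s)).mulVecLin μ) (k : Fin s) :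
    x (Sum.inr (Sum.inl ())) = μ * x (Sum.inr (Sum.inr k)) := by
  have h := (mem_eig _ _ _).1 hx (Sum.inr (Sum.inr k))
  rw [Fintype.sum_sum_type, Fintype.sum_sum_type] at h
  have h1 : ∀ a : V, (if (joinStar B p q s).Adj (Sum.inr (Sum.inr k)) (Sum.inl a)
      then x (Sum.inl a) else 0) = 0 := by
    intro a; rw [if_neg]; intro hadj; exact jadj_lleaf B p q s a k hadj.symm
  have h2 : ∀ k' : Fin s, (if (joinStar B p q s).Adj (Sum.inr (Sum.inr k)) (Sum.inr (Sum.inr k'))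
      then x (Sum.inr (Sum.inr k')) else 0) = 0 := by
    intro k'; rw [if_neg]; exact jadj_leafleaf B p q s k k'
  simp only [Finset.sum_congr rfl (fun a _ => h1 a), Finset.sum_congr rfl (fun a _ => h2 a),
    Finset.sum_const_zero, Fintype.sum_unique] at h
  rw [if_pos ((jadj_cleaf B p q s k).symm)] at h
  linarith [h]

lemma jrow_c (x : V ⊕ (Unit ⊕ Fin s) → ℝ)
    (hx : x ∈ Module.End.eigenspace (adjMat (joinStar B p q s)).mulVecLin μ) (hpq : p ≠ q) :
    x (Sum.inl p) + x (Sum.inl q) + ∑ k : Fin s, x (Sum.inr (Sum.inr k))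
      = μ * x (Sum.inr (Sum.inl ())) := by
  have h := (mem_eig _ _ _).1 hx (Sum.inr (Sum.inl ()))
  rw [Fintype.sum_sum_type, Fintype.sum_sum_type] at h
  have h1 : ∀ a : V, (if (joinStar B p q s).Adj (Sum.inr (Sum.inl ())) (Sum.inl a)
      then x (Sum.inl a) else 0) = (if a = p ∨ a = q then x (Sum.inl a) else 0) := by
    intro a
    by_cases hc : a = p ∨ a = q
    · rw [if_pos hc, if_pos (((jadj_lc B p q s a).2 hc).symm)]
    · rw [if_neg hc, if_neg]
      intro hadj; exact hc ((jadj_lc B p q s a).1 hadj.symm)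
  have h2 : ∀ k : Fin s, (if (joinStar B p q s).Adj (Sum.inr (Sum.inl ())) (Sum.inr (Sum.inr k))
      then x (Sum.inr (Sum.inr k)) else 0) = x (Sum.inr (Sum.inr k)) := by
    intro k; rw [if_pos (jadj_cleaf B p q s k)]
  rw [Finset.sum_congr rfl (fun a _ => h1 a), sum_pair hpq,
    Finset.sum_congr rfl (fun a _ => h2 a)] at h
  have h3 : (if (joinStar B p q s).Adj (Sum.inr (Sum.inl ())) (Sum.inr (Sum.inl ()))
      then x (Sum.inr (Sum.inl ())) else 0) = 0 := by
    rw [if_neg ((joinStar B p q s).irrefl)]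
  rw [Fintype.sum_unique] at h
  rw [h3] at h
  linarith [h]

lemma jrow_l (x : V ⊕ (Unit ⊕ Fin s) → ℝ)
    (hx : x ∈ Module.End.eigenspace (adjMat (joinStar B p q s)).mulVecLin μ) (v : V) :
    (∑ a, (if B.Adj v a then x (Sum.inl a) else 0))
      + (if v = p ∨ v = q then x (Sum.inr (Sum.inl ())) else 0) = μ * x (Sum.inl v) := by
  have h := (mem_eig _ _ _).1 hx (Sum.inl v)
  rw [Fintype.sum_sum_type, Fintype.sum_sum_type] at h
  have h1 : ∀ a : V, (if (joinStar B p q s).Adj (Sum.inl v) (Sum.inl a)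
      then x (Sum.inl a) else 0) = (if B.Adj v a then x (Sum.inl a) else 0) := by
    intro a
    by_cases hc : B.Adj v a
    · rw [if_pos hc, if_pos ((jadj_ll B p q s v a).2 hc)]
    · rw [if_neg hc, if_neg (fun hadj => hc ((jadj_ll B p q s v a).1 hadj))]
  have h2 : ∀ k : Fin s, (if (joinStar B p q s).Adj (Sum.inl v) (Sum.inr (Sum.inr k))
      then x (Sum.inr (Sum.inr k)) else 0) = 0 := by
    intro k; rw [if_neg (jadj_lleaf B p q s v k)]
  have h3 : (if (joinStar B p q s).Adj (Sum.inl v) (Sum.inr (Sum.inl ()))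
      then x (Sum.inr (Sum.inl ())) else 0)
      = (if v = p ∨ v = q then x (Sum.inr (Sum.inl ())) else 0) := by
    by_cases hc : v = p ∨ v = q
    · rw [if_pos hc, if_pos ((jadj_lc B p q s v).2 hc)]
    · rw [if_neg hc, if_neg (fun hadj => hc ((jadj_lc B p q s v).1 hadj))]
  have h4 : (∑ a₁ : Unit, if (joinStar B p q s).Adj (Sum.inl v) (Sum.inr (Sum.inl a₁))
      then x (Sum.inr (Sum.inl a₁)) else 0)
      = (if (joinStar B p q s).Adj (Sum.inl v) (Sum.inr (Sum.inl ()))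
      then x (Sum.inr (Sum.inl ())) else 0) := by simp
  rw [Finset.sum_congr rfl (fun a _ => h1 a), Finset.sum_congr rfl (fun a _ => h2 a),
    Finset.sum_const_zero, h4, h3] at h
  linarith [h]

end red

lemma reduction {V : Type*} [Fintype V] (B : SimpleGraph V) (p q : V) (hpq : p ≠ q)
    (s : ℕ) (μ : ℝ) (hμ : μ ≠ 0) :
    eigMult (joinStar B p q s) μ ≤ finrank ℝ (eigC B μ p q) + 1 := by
  classical
  set E := Module.End.eigenspace (adjMat (joinStar B p q s)).mulVecLin μ with hE
  let c : V ⊕ (Unit ⊕ Fin s) := Sum.inr (Sum.inl ())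
  let φ : E →ₗ[ℝ] ℝ := (LinearMap.proj c).comp E.subtype
  have hrank : finrank ℝ (LinearMap.range φ) + finrank ℝ (LinearMap.ker φ) = finrank ℝ E :=
    LinearMap.finrank_range_add_finrank_ker φ
  have h1 : finrank ℝ (LinearMap.range φ) ≤ 1 := by
    simpa using Submodule.finrank_le (LinearMap.range φ)
  -- key facts about x ∈ E with x c = 0
  have key : ∀ x : V ⊕ (Unit ⊕ Fin s) → ℝ, x ∈ E → x c = 0 →
      (fun v => x (Sum.inl v)) ∈ eigC B μ p q ∧ ∀ k : Fin s, x (Sum.inr (Sum.inr k)) = 0 := by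
    intro x hx hc
    have hleaf : ∀ k : Fin s, x (Sum.inr (Sum.inr k)) = 0 := by
      intro k
      have := jrow_leaf x hx k
      rw [hc] at this
      exact (mul_eq_zero.1 this.symm).resolve_left hμ
    refine ⟨(mem_eigC _ _ _ _ _).2 ⟨fun v => ?_, ?_⟩, hleaf⟩
    · have := jrow_l x hx v
      by_cases hv : v = p ∨ v = q
      · rw [if_pos hv, hc, add_zero] at this; exact this
      · rw [if_neg hv, add_zero] at this; exact this
    · have := jrow_c x hx hpq
      rw [hc, mul_zero] at this
      have hz : (∑ k : Fin s, x (Sum.inr (Sum.inr k))) = 0 := by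
        simp [hleaf]
      simpa [hz] using this
  have h2 : finrank ℝ (LinearMap.ker φ) ≤ finrank ℝ (eigC B μ p q) := by
    let ρ : (V ⊕ (Unit ⊕ Fin s) → ℝ) →ₗ[ℝ] (V → ℝ) := LinearMap.funLeft ℝ ℝ Sum.inl
    let ψ0 : LinearMap.ker φ →ₗ[ℝ] (V → ℝ) :=
      ρ.comp (E.subtype.comp (LinearMap.ker φ).subtype)
    have hmem : ∀ z : LinearMap.ker φ, ψ0 z ∈ eigC B μ p q := by
      rintro ⟨⟨x, hx⟩, hz⟩
      have hc : x c = 0 := by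
        simpa [φ] using hz
      exact (key x hx hc).1
    let ψ : LinearMap.ker φ →ₗ[ℝ] (eigC B μ p q) := ψ0.codRestrict _ hmem
    have hinj : Function.Injective ψ := by
      rintro ⟨⟨x, hx⟩, hzx⟩ ⟨⟨y, hy⟩, hzy⟩ hxy
      have hcx : x c = 0 := by simpa [φ] using hzx
      have hcy : y c = 0 := by simpa [φ] using hzy
      have hres : ∀ v, x (Sum.inl v) = y (Sum.inl v) := by
        intro v
        have := congrArg Subtype.val hxy
        exact congrFun this v
      apply Subtype.ext; apply Subtype.ext
      funext u
      rcases u with v | (u | k)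
      · exact hres v
      · cases u
        show x c = y c
        rw [hcx, hcy]
      · show x (Sum.inr (Sum.inr k)) = y (Sum.inr (Sum.inr k))
        rw [(key x hx hcx).2 k, (key y hy hcy).2 k]
    exact LinearMap.finrank_le_finrank_of_injective hinj
  rw [eigMult, ← hE, ← hrank]
  omega

section cyc
variable {μ : ℝ} {p q : Fin 5}

lemma cyc_adj : ∀ u v : Fin 5, (SimpleGraph.cycleGraph 5).Adj u v ↔ (v = u + 1 ∨ v = u - 1) := by
  decide

lemma fin5_cases : ∀ p q : Fin 5, p ≠ q → (q = p + 1 ∨ q = p + 2 ∨ q = p + 3 ∨ q = p + 4) := by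
  decide

lemma fin5_ne : ∀ u : Fin 5, u + 1 ≠ u - 1 := by decide
lemma fin5_a : ∀ r : Fin 5, r + 3 + 2 = r := by decide
lemma fin5_b : ∀ r : Fin 5, r + 4 + 1 = r := by decide

lemma cyc_rec (y : Fin 5 → ℝ) (hy : y ∈ eigC (SimpleGraph.cycleGraph 5) μ p q) (u : Fin 5) :
    μ * y u = y (u + 1) + y (u - 1) := by
  have h := ((mem_eigC _ _ _ _ _).1 hy).1 u
  have hne := fin5_ne u
  have hsplit : ∀ v : Fin 5, (@ite ℝ ((SimpleGraph.cycleGraph 5).Adj u v)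
      (Classical.propDecidable _) (y v) 0)
      = (if v = u + 1 then y v else 0) + (if v = u - 1 then y v else 0) := by
    intro v
    by_cases h1 : v = u + 1 <;> by_cases h2 : v = u - 1 <;> simp_all [cyc_adj]
  rw [Finset.sum_congr rfl (fun v _ => hsplit v), Finset.sum_add_distrib] at h
  simp only [Finset.sum_ite_eq', Finset.mem_univ, if_true] at h
  linarith

lemma cyc5 (hμ : μ ≠ 0) (hpq : p ≠ q) :
    finrank ℝ (eigC (SimpleGraph.cycleGraph 5) μ p q) ≤ 1 := by
  apply finrank_le_one_of_eval _ p
  intro y hy hp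
  have hsum : y p + y q = 0 := ((mem_eigC _ _ _ _ _).1 hy).2
  have hq : y q = 0 := by rw [hp] at hsum; linarith
  have hrec : ∀ u, μ * y u = y (u + 1) + y (u - 1) := cyc_rec y hy
  have killAdj : ∀ r : Fin 5, y r = 0 → y (r + 1) = 0 → ∀ j, y j = 0 := by
    intro r h0 h1 j
    have h2 : y (r + 2) = 0 := by
      have h := hrec (r + 1)
      rw [show r + 1 + 1 = r + 2 by open Fin.CommRing in ring, show r + 1 - 1 = r by open Fin.CommRing in ring, h0, h1, mul_zero] at h
      linarith
    have h3 : y (r + 3) = 0 := by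
      have h := hrec (r + 2)
      rw [show r + 2 + 1 = r + 3 by open Fin.CommRing in ring, show r + 2 - 1 = r + 1 by open Fin.CommRing in ring, h1, h2, mul_zero] at h
      linarith
    have h4 : y (r + 4) = 0 := by
      have h := hrec (r + 3)
      rw [show r + 3 + 1 = r + 4 by open Fin.CommRing in ring, show r + 3 - 1 = r + 2 by open Fin.CommRing in ring, h2, h3, mul_zero] at h
      linarith
    have hd : ∀ d : Fin 5, y (r + d) = 0 := by
      intro d
      fin_cases d
      · simpa using h0
      · exact h1
      · exact h2
      · exact h3
      · exact h4
    have := hd (j - r)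
    rwa [show r + (j - r) = j by open Fin.CommRing in ring] at this
  have killDist2 : ∀ r : Fin 5, y r = 0 → y (r + 2) = 0 → ∀ j, y j = 0 := by
    intro r h0 h2
    have h1 : y (r + 1) = 0 := by
      have h := hrec (r + 1)
      rw [show r + 1 + 1 = r + 2 by open Fin.CommRing in ring, show r + 1 - 1 = r by open Fin.CommRing in ring, h0, h2] at h
      have := mul_eq_zero.1 (by linarith : μ * y (r + 1) = 0)
      exact this.resolve_left hμ
    exact killAdj r h0 h1
  funext j
  show y j = 0
  rcases fin5_cases p q hpq with h | h | h | h
  · exact killAdj p hp (h ▸ hq) j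
  · exact killDist2 p hp (h ▸ hq) j
  · refine killDist2 q hq ?_ j
    rw [show q + 2 = p by rw [h]; exact fin5_a p]
    exact hp
  · refine killAdj q hq ?_ j
    rw [show q + 1 = p by rw [h]; exact fin5_b p]
    exact hp
end cyc


section tri
variable {a : ℕ} {μ : ℝ} {p q : Fin 3 ⊕ Fin 3 × Fin a}

lemma tadj_ll (i j : Fin 3) : (triStar a).Adj (Sum.inl i) (Sum.inl j) ↔ i ≠ j := by
  constructor
  · rintro ⟨hne, -⟩
    exact fun h => hne (by rw [h])
  · intro h
    exact ⟨by simp [h], Or.inl (Or.inl ⟨i, j, rfl, rfl⟩)⟩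

lemma tadj_lleaf (i j : Fin 3) (k : Fin a) :
    (triStar a).Adj (Sum.inl i) (Sum.inr (j, k)) ↔ j = i := by
  constructor
  · rintro ⟨hne, (⟨i',j',h1,h2⟩|⟨i',k',h1,h2⟩)|(⟨i',j',h1,h2⟩|⟨i',k',h1,h2⟩)⟩ <;> simp_all
  · rintro rfl
    exact ⟨by simp, Or.inl (Or.inr ⟨j, k, rfl, rfl⟩)⟩

lemma tadj_leafleaf (u v : Fin 3 × Fin a) :
    ¬ (triStar a).Adj (Sum.inr u) (Sum.inr v) := by
  rintro ⟨hne, (⟨i',j',h1,h2⟩|⟨i',k',h1,h2⟩)|(⟨i',j',h1,h2⟩|⟨i',k',h1,h2⟩)⟩ <;> simp_all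

lemma trow_leaf (y : Fin 3 ⊕ Fin 3 × Fin a → ℝ) (hy : y ∈ eigC (triStar a) μ p q)
    (i : Fin 3) (k : Fin a) : μ * y (Sum.inr (i, k)) = y (Sum.inl i) := by
  have h := ((mem_eigC _ _ _ _ _).1 hy).1 (Sum.inr (i, k))
  rw [Fintype.sum_sum_type] at h
  have h1 : ∀ j : Fin 3, (@ite ℝ ((triStar a).Adj (Sum.inr (i, k)) (Sum.inl j))
      (Classical.propDecidable _) (y (Sum.inl j)) 0) = (if j = i then y (Sum.inl j) else 0) := by
    intro j
    by_cases hc : j = i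
    · subst hc
      rw [if_pos ((tadj_lleaf j j k).2 rfl).symm, if_pos rfl]
    · rw [if_neg (fun hadj => hc (((tadj_lleaf j i k).1 hadj.symm).symm)), if_neg hc]
  have h2 : ∀ w : Fin 3 × Fin a, (@ite ℝ ((triStar a).Adj (Sum.inr (i, k)) (Sum.inr w))
      (Classical.propDecidable _) (y (Sum.inr w)) 0) = 0 := by
    intro w
    rw [if_neg (tadj_leafleaf (i, k) w)]
  rw [Finset.sum_congr rfl (fun j _ => h1 j), Finset.sum_congr rfl (fun w _ => h2 w),
    Finset.sum_const_zero, add_zero] at h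
  simp only [Finset.sum_ite_eq', Finset.mem_univ, if_true] at h
  linarith

lemma trow_l (y : Fin 3 ⊕ Fin 3 × Fin a → ℝ) (hy : y ∈ eigC (triStar a) μ p q) (i : Fin 3) :
    μ * y (Sum.inl i) = ((∑ j, y (Sum.inl j)) - y (Sum.inl i))
      + ∑ k : Fin a, y (Sum.inr (i, k)) := by
  have h := ((mem_eigC _ _ _ _ _).1 hy).1 (Sum.inl i)
  rw [Fintype.sum_sum_type, Fintype.sum_prod_type] at h
  have h1 : ∀ j : Fin 3, (@ite ℝ ((triStar a).Adj (Sum.inl i) (Sum.inl j))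
      (Classical.propDecidable _) (y (Sum.inl j)) 0)
      = y (Sum.inl j) - (if j = i then y (Sum.inl j) else 0) := by
    intro j
    by_cases hc : j = i
    · subst hc
      rw [if_pos rfl, if_neg (fun hadj => ((tadj_ll j j).1 hadj) rfl)]
      ring
    · rw [if_pos ((tadj_ll i j).2 (fun h' => hc h'.symm)), if_neg hc]
      ring
  have h2 : ∀ j : Fin 3, (∑ k : Fin a, @ite ℝ ((triStar a).Adj (Sum.inl i) (Sum.inr (j, k)))
      (Classical.propDecidable _) (y (Sum.inr (j, k))) 0)
      = (if j = i then ∑ k : Fin a, y (Sum.inr (j, k)) else 0) := by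
    intro j
    by_cases hc : j = i
    · rw [if_pos hc]
      exact Finset.sum_congr rfl (fun k _ => if_pos ((tadj_lleaf i j k).2 hc))
    · rw [if_neg hc]
      exact Finset.sum_eq_zero (fun k _ => if_neg (fun hadj => hc ((tadj_lleaf i j k).1 hadj)))
  rw [Finset.sum_congr rfl (fun j _ => h1 j), Finset.sum_congr rfl (fun j _ => h2 j),
    Finset.sum_sub_distrib] at h
  simp only [Finset.sum_ite_eq', Finset.mem_univ, if_true] at h
  linarith

lemma tmaster (y : Fin 3 ⊕ Fin 3 × Fin a → ℝ) (hy : y ∈ eigC (triStar a) μ p q) (i : Fin 3) :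
    (μ ^ 2 + μ - (a : ℝ)) * y (Sum.inl i) = μ * (∑ j, y (Sum.inl j)) := by
  have h := trow_l y hy i
  have hk : μ * (∑ k : Fin a, y (Sum.inr (i, k))) = (a : ℝ) * y (Sum.inl i) := by
    rw [Finset.mul_sum, Finset.sum_congr rfl (fun k _ => trow_leaf y hy i k)]
    simp [mul_comm]
  linear_combination μ * h + hk

lemma fin3_ne : ∀ i : Fin 3, i ≠ i + 1 := by decide

lemma sum3 (x : Fin 3 → ℝ) : ∀ (i j l : Fin 3), i ≠ j → l ≠ i → l ≠ j →
    x i + x j + x l = x 0 + x 1 + x 2 := by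
  intro i j l hij hli hlj
  fin_cases i <;> fin_cases j <;> fin_cases l <;> simp_all <;> ring

lemma tri_le_one (hμ : μ ≠ 0) (hpq : p ≠ q) : finrank ℝ (eigC (triStar a) μ p q) ≤ 1 := by
  have main : ∃ m : Fin 3, ∀ y ∈ eigC (triStar a) μ p q,
      y (Sum.inl m) = 0 → ∀ i : Fin 3, y (Sum.inl i) = 0 := by
    by_cases ht : (μ ^ 2 + μ - (a : ℝ)) = 0
    · -- S = 0 for all eigenvectors
      have hS : ∀ y ∈ eigC (triStar a) μ p q, (∑ j, y (Sum.inl j)) = 0 := by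
        intro y hy
        have h := tmaster y hy 0
        rw [ht, zero_mul] at h
        exact (mul_eq_zero.1 h.symm).resolve_left hμ
      have third : ∀ (y : Fin 3 ⊕ Fin 3 × Fin a → ℝ), y ∈ eigC (triStar a) μ p q →
          ∀ (i m : Fin 3), i ≠ m → y (Sum.inl i) = 0 → y (Sum.inl m) = 0 →
          ∀ l, y (Sum.inl l) = 0 := by
        intro y hy i m him h0i h0m l
        by_cases hl1 : l = i
        · rw [hl1]; exact h0i
        by_cases hl2 : l = m
        · rw [hl2]; exact h0m
        have := sum3 (fun j => y (Sum.inl j)) i m l him hl1 hl2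
        have hs := hS y hy
        rw [Fin.sum_univ_three] at hs
        simp only [h0i, h0m] at this
        linarith
      -- case analysis on p, q
      rcases p with i | ⟨i, k⟩ <;> rcases q with j | ⟨j, k'⟩
      · -- both triangle vertices
        have hij : i ≠ j := fun h => hpq (by rw [h])
        refine ⟨i, fun y hy h0 => ?_⟩
        have hsum : y (Sum.inl i) + y (Sum.inl j) = 0 := ((mem_eigC _ _ _ _ _).1 hy).2
        have hj : y (Sum.inl j) = 0 := by linarith [hsum, h0]
        exact third y hy i j hij h0 hj
      · -- p vertex i, q leaf (j, k')
        by_cases hij : i = j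
        · subst hij
          -- (μ+1) x i = 0 and μ ≠ -1
          have hμ1 : μ + 1 ≠ 0 := by
            intro h
            have hμe : μ = -1 := by linarith
            rw [hμe] at ht
            have : (a : ℝ) = 0 := by nlinarith [ht]
            have : a = 0 := by exact_mod_cast this
            subst this
            exact k'.elim0
          refine ⟨i + 1, fun y hy h0 => ?_⟩
          have hsum : y (Sum.inl i) + y (Sum.inr (i, k')) = 0 := ((mem_eigC _ _ _ _ _).1 hy).2
          have hlf := trow_leaf y hy i k'
          have hxi : (μ + 1) * y (Sum.inl i) = 0 := by linear_combination μ * hsum - hlf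
          have hxi0 : y (Sum.inl i) = 0 := (mul_eq_zero.1 hxi).resolve_left hμ1
          exact third y hy i (i + 1) (fin3_ne i) hxi0 h0
        · refine ⟨i, fun y hy h0 => ?_⟩
          have hsum : y (Sum.inl i) + y (Sum.inr (j, k')) = 0 := ((mem_eigC _ _ _ _ _).1 hy).2
          have hlf := trow_leaf y hy j k'
          have hxj : y (Sum.inl j) = 0 := by
            have : μ * y (Sum.inl i) + y (Sum.inl j) = 0 := by linear_combination μ * hsum - hlf
            rw [h0] at this; linarith
          exact third y hy i j hij h0 hxj
      · -- p leaf (i,k), q vertex j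
        by_cases hij : j = i
        · subst hij
          have hμ1 : μ + 1 ≠ 0 := by
            intro h
            have hμe : μ = -1 := by linarith
            rw [hμe] at ht
            have : (a : ℝ) = 0 := by nlinarith [ht]
            have : a = 0 := by exact_mod_cast this
            subst this
            exact k.elim0
          refine ⟨j + 1, fun y hy h0 => ?_⟩
          have hsum : y (Sum.inr (j, k)) + y (Sum.inl j) = 0 := ((mem_eigC _ _ _ _ _).1 hy).2
          have hlf := trow_leaf y hy j k
          have hxi : (μ + 1) * y (Sum.inl j) = 0 := by linear_combination μ * hsum - hlf
          have hxi0 : y (Sum.inl j) = 0 := (mul_eq_zero.1 hxi).resolve_left hμ1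
          exact third y hy j (j + 1) (fin3_ne j) hxi0 h0
        · refine ⟨j, fun y hy h0 => ?_⟩
          have hsum : y (Sum.inr (i, k)) + y (Sum.inl j) = 0 := ((mem_eigC _ _ _ _ _).1 hy).2
          have hlf := trow_leaf y hy i k
          have hxj : y (Sum.inl i) = 0 := by
            have : y (Sum.inl i) + μ * y (Sum.inl j) = 0 := by linear_combination μ * hsum - hlf
            rw [h0] at this; linarith
          exact third y hy j i hij h0 hxj
      · -- both leaves
        by_cases hij : i = j
        · subst hij
          refine ⟨i + 1, fun y hy h0 => ?_⟩
          have hsum : y (Sum.inr (i, k)) + y (Sum.inr (i, k')) = 0 := ((mem_eigC _ _ _ _ _).1 hy).2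
          have hlf := trow_leaf y hy i k
          have hlf' := trow_leaf y hy i k'
          have hxi : (2 : ℝ) * y (Sum.inl i) = 0 := by linear_combination μ * hsum - hlf - hlf'
          have hxi0 : y (Sum.inl i) = 0 := by linarith
          exact third y hy i (i + 1) (fin3_ne i) hxi0 h0
        · refine ⟨i, fun y hy h0 => ?_⟩
          have hsum : y (Sum.inr (i, k)) + y (Sum.inr (j, k')) = 0 := ((mem_eigC _ _ _ _ _).1 hy).2
          have hlf := trow_leaf y hy i k
          have hlf' := trow_leaf y hy j k'
          have hxj : y (Sum.inl j) = 0 := by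
            have : y (Sum.inl i) + y (Sum.inl j) = 0 := by linear_combination μ * hsum - hlf - hlf'
            rw [h0] at this; linarith
          exact third y hy i j hij h0 hxj
    · -- t ≠ 0 : all triangle coordinates equal
      refine ⟨0, fun y hy h0 i => ?_⟩
      have h1 := tmaster y hy i
      have h2 := tmaster y hy 0
      rw [h0, mul_zero] at h2
      rw [← h2] at h1
      exact (mul_eq_zero.1 h1).resolve_left ht
  obtain ⟨m, hm⟩ := main
  apply finrank_le_one_of_eval _ (Sum.inl m)
  intro y hy h0
  have hall := hm y hy h0
  funext u
  rcases u with i | ⟨i, k⟩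
  · exact hall i
  · have := trow_leaf y hy i k
    rw [hall i] at this
    have := (mul_eq_zero.1 this).resolve_left hμ
    exact this
end tri

lemma eigC_le_of_iso {V : Type*} {W : Type*} [Fintype V] [Fintype W]
    (B : SimpleGraph V) (C : SimpleGraph W) (e : B ≃g C) (μ : ℝ) (p q : V) :
    finrank ℝ (eigC B μ p q) ≤ finrank ℝ (eigC C μ (e p) (e q)) := by
  classical
  let ρ : (V → ℝ) →ₗ[ℝ] (W → ℝ) := LinearMap.funLeft ℝ ℝ (fun w => e.symm w)
  have hmem : ∀ y : V → ℝ, y ∈ eigC B μ p q → ρ y ∈ eigC C μ (e p) (e q) := by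
    intro y hy
    obtain ⟨heig, hsum⟩ := (mem_eigC _ _ _ _ _).1 hy
    refine (mem_eigC _ _ _ _ _).2 ⟨fun u => ?_, ?_⟩
    · have hre : (∑ v : W, (if C.Adj u v then (ρ y) v else 0))
          = ∑ w : V, (if C.Adj u (e w) then y (e.symm (e w)) else 0) :=
        (Equiv.sum_comp e.toEquiv (fun v => if C.Adj u v then (ρ y) v else 0)).symm
      rw [hre]
      have hterm : ∀ w : V, (if C.Adj u (e w) then y (e.symm (e w)) else 0)
          = (if B.Adj (e.symm u) w then y w else 0) := by
        intro w
        have hadj : C.Adj u (e w) ↔ B.Adj (e.symm u) w := by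
          conv_lhs => rw [show u = e (e.symm u) by simp]
          exact e.map_adj_iff
        by_cases hc : B.Adj (e.symm u) w
        · rw [if_pos (hadj.2 hc), if_pos hc]
          simp
        · rw [if_neg (fun h => hc (hadj.1 h)), if_neg hc]
      rw [Finset.sum_congr rfl (fun w _ => hterm w)]
      have := heig (e.symm u)
      simpa [ρ, LinearMap.funLeft] using this
    · show y (e.symm (e p)) + y (e.symm (e q)) = 0
      simpa using hsum
  have hinj : Function.Injective ρ :=
    LinearMap.funLeft_injective_of_surjective ℝ ℝ _ (fun v => ⟨e v, by simp⟩)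
  let ψ : (eigC B μ p q) →ₗ[ℝ] (eigC C μ (e p) (e q)) :=
    (ρ.comp (eigC B μ p q).subtype).codRestrict _ (fun z => hmem z z.2)
  have : Function.Injective ψ := by
    intro z1 z2 h
    apply Subtype.ext
    apply hinj
    exact congrArg Subtype.val h
  exact LinearMap.finrank_le_finrank_of_injective this

theorem stmt12 {V : Type*} [Fintype V] (B : SimpleGraph V)
    (hB : (∃ a, Nonempty (B ≃g triStar a)) ∨ Nonempty (B ≃g SimpleGraph.cycleGraph 5))
    (p q : V) (hpq : p ≠ q) (s : ℕ) (μ : ℝ) (hμ : μ ≠ 0) :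
    eigMult (joinStar B p q s) μ ≤ 2 := by
  have hred := reduction B p q hpq s μ hμ
  have h1 : finrank ℝ (eigC B μ p q) ≤ 1 := by
    rcases hB with ⟨a, he⟩ | he
    · obtain ⟨e⟩ := he
      refine le_trans (eigC_le_of_iso B (triStar a) e μ p q) ?_
      exact tri_le_one hμ (fun h => hpq (e.toEquiv.injective h))
    · obtain ⟨e⟩ := he
      refine le_trans (eigC_le_of_iso B (SimpleGraph.cycleGraph 5) e μ p q) ?_
      exact cyc5 hμ (fun h => hpq (e.toEquiv.injective h))
  omega
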